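/- Let Ω be a measurable space, let S be a Souslin space (a metrizable topological space that is the image of a Polish space under a continuous map), and let X be a countably C-separated T1 topological space. Let {F_s}_{s∈S} be a family of compact-valued multifunctions F_s : Ω → X such that the multifunction (ω, s) ↦ F_s(ω) on Ω × S (with the product σ-algebra of the σ-algebra on Ω and the Borel σ-algebra of S) is closed-measurable. Then the multifunction ω ↦ ⋂_{s∈S} F_s(ω) is universally closed-measurable. -/

import Mathlib

open MeasureTheory Set Function Topology Filter
open scoped ENNReal

namespace Stmt7Aux

theorem inner_approx {Y : Type*} [TopologicalSpace Y] [PolishSpace Y]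
    [MeasurableSpace Y] [BorelSpace Y]
    (f : (ℕ → ℕ) → Y) (hf : Continuous f) (ν : Measure Y) [IsFiniteMeasure ν]
    {ε : ℝ≥0∞} (hε : 0 < ε) :
    ∃ D : Set Y, MeasurableSet D ∧ D ⊆ range f ∧ ν (range f) ≤ ν D + ε := by
  letI := TopologicalSpace.upgradeIsCompletelyMetrizable Y
  have key : ∀ (v : ℕ → ℕ) (k : ℕ), ∃ j : ℕ,
      ν (f '' {t | ∀ i < k, t i ≤ v i}) ≤
        ν (f '' {t | (∀ i < k, t i ≤ v i) ∧ t k ≤ j}) + ε / 2 ^ (k + 1) := by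
    intro v k
    set a := ν (f '' {t | ∀ i < k, t i ≤ v i}) with ha
    have hmono : Monotone (fun j : ℕ => f '' {t | (∀ i < k, t i ≤ v i) ∧ t k ≤ j}) := by
      intro j j' hjj'
      exact image_mono (fun t ht => ⟨ht.1, ht.2.trans hjj'⟩)
    have hU' : (⋃ j : ℕ, {t : ℕ → ℕ | (∀ i < k, t i ≤ v i) ∧ t k ≤ j}) =
        {t : ℕ → ℕ | ∀ i < k, t i ≤ v i} := by
      ext t
      simp only [mem_iUnion, mem_setOf_eq]
      exact ⟨fun ⟨j, hj⟩ => hj.1, fun h => ⟨t k, h, le_rfl⟩⟩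
    have hU : (⋃ j : ℕ, f '' {t | (∀ i < k, t i ≤ v i) ∧ t k ≤ j}) =
        f '' {t | ∀ i < k, t i ≤ v i} := by
      rw [← image_iUnion, hU']
    by_contra hcon
    push_neg at hcon
    have hsup : a = ⨆ j : ℕ, ν (f '' {t | (∀ i < k, t i ≤ v i) ∧ t k ≤ j}) := by
      rw [ha, ← hU, hmono.measure_iUnion]
    have hεk : (0 : ℝ≥0∞) < ε / 2 ^ (k + 1) :=
      ENNReal.div_pos hε.ne' (ENNReal.pow_ne_top ENNReal.ofNat_ne_top)
    have hle : a + ε / 2 ^ (k + 1) ≤ a := by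
      calc a + ε / 2 ^ (k + 1)
          = (⨆ j : ℕ, ν (f '' {t | (∀ i < k, t i ≤ v i) ∧ t k ≤ j})) + ε / 2 ^ (k + 1) := by
            rw [← hsup]
        _ = ⨆ j : ℕ, (ν (f '' {t | (∀ i < k, t i ≤ v i) ∧ t k ≤ j}) + ε / 2 ^ (k + 1)) :=
            ENNReal.iSup_add _
        _ ≤ a := iSup_le fun j => (hcon j).le
    have hane : a ≠ ∞ := measure_ne_top ν _
    have := (ENNReal.add_le_add_iff_left hane).1 (by simpa using hle : a + ε / 2 ^ (k+1) ≤ a + 0)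
    exact absurd this (by simpa using hεk.ne')
  choose J hJ using key
  set M : ℕ → (ℕ → ℕ) :=
    fun k => Nat.rec (fun _ => 0) (fun k' Mk => fun i => if i = k' then J Mk k' else Mk i) k with hM
  set m : ℕ → ℕ := fun k => J (M k) k with hm
  have hMagree : ∀ k, ∀ i, i < k → M k i = m i := by
    intro k
    induction k with
    | zero => intro i hi; omega
    | succ k ih =>
      intro i hi
      show (if i = k then J (M k) k else M k i) = m i
      by_cases h : i = k
      · subst h; simp [hm]
      · have h' : i < k := by omega
        simp [h, ih i h']
  set T : ℕ → Set (ℕ → ℕ) := fun k => {t | ∀ i < k, t i ≤ m i} with hT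
  have hTstep : ∀ k, ν (f '' T k) ≤ ν (f '' T (k + 1)) + ε / 2 ^ (k + 1) := by
    intro k
    have h1 : {t : ℕ → ℕ | ∀ i < k, t i ≤ M k i} = T k := by
      ext t; simp only [hT, mem_setOf_eq]
      exact forall₂_congr fun i hi => by rw [hMagree k i hi]
    have h2 : {t : ℕ → ℕ | (∀ i < k, t i ≤ M k i) ∧ t k ≤ J (M k) k} = T (k + 1) := by
      ext t
      simp only [hT, mem_setOf_eq]
      constructor
      · rintro ⟨h, hk⟩ i hi
        rcases Nat.lt_succ_iff_lt_or_eq.1 hi with h' | rfl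
        · rw [← hMagree k i h']; exact h i h'
        · exact hk
      · intro h
        exact ⟨fun i hi => by rw [hMagree k i hi]; exact h i (hi.trans (Nat.lt_succ_self k)),
          h k (Nat.lt_succ_self k)⟩
    have := hJ (M k) k
    rwa [h1, h2] at this
  have hTacc : ∀ k, ν (range f) ≤ ν (f '' T k) + ∑ i ∈ Finset.range k, ε / 2 ^ (i + 1) := by
    intro k
    induction k with
    | zero =>
      have hT0 : T 0 = univ := by ext t; simp [hT]
      rw [hT0, image_univ]; simp
    | succ k ih =>
      calc ν (range f) ≤ ν (f '' T k) + ∑ i ∈ Finset.range k, ε / 2 ^ (i + 1) := ih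
        _ ≤ (ν (f '' T (k + 1)) + ε / 2 ^ (k + 1)) + ∑ i ∈ Finset.range k, ε / 2 ^ (i + 1) :=
            add_le_add_left (hTstep k) _
        _ = ν (f '' T (k + 1)) + ∑ i ∈ Finset.range (k + 1), ε / 2 ^ (i + 1) := by
            rw [Finset.sum_range_succ]; ring
  have hsum_le : ∀ k, (∑ i ∈ Finset.range k, ε / 2 ^ (i + 1)) ≤ ε := by
    intro k
    calc ∑ i ∈ Finset.range k, ε / 2 ^ (i + 1) ≤ ∑' i : ℕ, ε / 2 ^ (i + 1) :=
        ENNReal.sum_le_tsum _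
      _ = ε := by
        have hpow : ∀ i : ℕ, ε / 2 ^ (i + 1) = ε * 2⁻¹ ^ (i + 1) := fun i => by
          rw [div_eq_mul_inv, ← ENNReal.inv_pow]
        simp_rw [hpow]
        rw [ENNReal.tsum_mul_left, ENNReal.tsum_geometric_add_one, ENNReal.one_sub_inv_two,
          inv_inv, ENNReal.inv_mul_cancel two_ne_zero ENNReal.ofNat_ne_top, mul_one]
  refine ⟨⋂ k, closure (f '' T k),
    MeasurableSet.iInter (fun k => isClosed_closure.measurableSet), ?_, ?_⟩
  · -- the diagonal compactness argument
    intro y hy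
    simp only [mem_iInter] at hy
    have hpt : ∀ k : ℕ, ∃ t : ℕ → ℕ, t ∈ T (k + 1) ∧ dist y (f t) < 1 / (k + 1) := by
      intro k
      have h1 := hy (k + 1)
      rw [Metric.mem_closure_iff] at h1
      obtain ⟨z, hz, hdz⟩ := h1 (1 / (k + 1)) (by positivity)
      obtain ⟨t, ht, rfl⟩ := hz
      exact ⟨t, ht, hdz⟩
    choose u hu hud using hpt
    have hKcomp : IsCompact (univ.pi fun i => Iic (m i)) :=
      isCompact_univ_pi fun i => (finite_Iic (m i)).isCompact
    set v : ℕ → (ℕ → ℕ) := fun k i => min (u k i) (m i) with hv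
    have hvK : ∀ k, v k ∈ univ.pi fun i => Iic (m i) := fun k =>
      mem_univ_pi.2 fun i => mem_Iic.2 (min_le_right _ _)
    obtain ⟨b, _, φ, hφ, hconv⟩ := hKcomp.tendsto_subseq hvK
    have huconv : Tendsto (u ∘ φ) atTop (𝓝 b) := by
      rw [tendsto_pi_nhds] at hconv ⊢
      intro i
      refine (hconv i).congr' ?_
      filter_upwards [eventually_ge_atTop i] with k hk
      have hik : i < φ k + 1 := Nat.lt_succ_of_le (hk.trans (hφ.le_apply))
      have hle : u (φ k) i ≤ m i := hu (φ k) i hik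
      simp [comp_apply, hv, min_eq_left hle]
    have hf1 : Tendsto (f ∘ u ∘ φ) atTop (𝓝 (f b)) := (hf.tendsto b).comp huconv
    have hf2 : Tendsto (f ∘ u ∘ φ) atTop (𝓝 y) := by
      have hb : ∀ k, dist ((f ∘ u ∘ φ) k) y ≤ 1 / ((k : ℝ) + 1) := by
        intro k
        have h1 := hud (φ k)
        have h2 : (1 : ℝ) / (φ k + 1) ≤ 1 / ((k : ℝ) + 1) := by
          apply one_div_le_one_div_of_le (by positivity)
          have hk : k ≤ φ k := hφ.le_apply
          have : (k : ℝ) ≤ (φ k : ℝ) := Nat.cast_le.2 hk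
          linarith
        calc dist ((f ∘ u ∘ φ) k) y = dist y (f (u (φ k))) := dist_comm _ _
          _ ≤ 1 / ((φ k : ℝ) + 1) := h1.le
          _ ≤ 1 / ((k : ℝ) + 1) := h2
      rw [tendsto_iff_dist_tendsto_zero]
      exact squeeze_zero (fun k => dist_nonneg) hb tendsto_one_div_add_atTop_nhds_zero_nat
    have : y = f b := tendsto_nhds_unique hf2 hf1
    exact ⟨b, this.symm⟩
  · have hmeas : ∀ k, MeasurableSet (closure (f '' T k)) := fun k =>
      isClosed_closure.measurableSet
    have hanti : Antitone fun k => closure (f '' T k) := by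
      intro k k' hkk'
      exact closure_mono (image_mono fun t ht i hi => ht i (hi.trans_le hkk'))
    have hiInter : ν (⋂ k, closure (f '' T k)) = ⨅ k, ν (closure (f '' T k)) :=
      Directed.measure_iInter (fun k => (hmeas k).nullMeasurableSet) hanti.directed_ge
        ⟨0, measure_ne_top ν _⟩
    calc ν (range f) ≤ (⨅ k, ν (closure (f '' T k))) + ε := by
          rw [ENNReal.iInf_add]
          refine le_iInf fun k => ?_
          calc ν (range f) ≤ ν (f '' T k) + ∑ i ∈ Finset.range k, ε / 2 ^ (i + 1) := hTacc k
            _ ≤ ν (closure (f '' T k)) + ε :=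
                add_le_add (measure_mono subset_closure) (hsum_le k)
      _ = ν (⋂ k, closure (f '' T k)) + ε := by rw [hiInter]

theorem analytic_nullMeasurableSet {Y : Type*} [TopologicalSpace Y] [PolishSpace Y]
    [MeasurableSpace Y] [BorelSpace Y] {A : Set Y} (hA : AnalyticSet A)
    (ν : Measure Y) [IsFiniteMeasure ν] : NullMeasurableSet A ν := by
  rcases eq_empty_or_nonempty A with rfl | hAne
  · exact MeasurableSet.empty.nullMeasurableSet
  obtain ⟨β, tβ, hβpol, g, hg, hgr⟩ := analyticSet_iff_exists_polishSpace_range.1 hA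
  haveI : Nonempty β := by
    obtain ⟨y, hy⟩ := hAne
    rw [← hgr] at hy
    exact ⟨hy.choose⟩
  obtain ⟨q, hqc, hqs⟩ := PolishSpace.exists_nat_nat_continuous_surjective β
  set f : (ℕ → ℕ) → Y := g ∘ q with hfdef
  have hfc : Continuous f := hg.comp hqc
  have hfr : range f = A := by
    rw [hfdef, range_comp, hqs.range_eq, image_univ, hgr]
  have happrox : ∀ n : ℕ, ∃ D, MeasurableSet D ∧ D ⊆ A ∧ ν A ≤ ν D + (↑(n + 1))⁻¹ := by
    intro n
    obtain ⟨D, h1, h2, h3⟩ := inner_approx f hfc ν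
      (ε := (↑(n + 1) : ℝ≥0∞)⁻¹)
      (ENNReal.inv_pos.2 (by simp))
    rw [hfr] at h2 h3
    exact ⟨D, h1, h2, h3⟩
  choose D hDmeas hDsub hDle using happrox
  set D' := ⋃ n, D n with hD'
  have hD'meas : MeasurableSet D' := MeasurableSet.iUnion hDmeas
  have hD'sub : D' ⊆ A := iUnion_subset hDsub
  have hνA : ν A = ν D' := by
    refine le_antisymm ?_ (measure_mono hD'sub)
    refine ENNReal.le_of_forall_pos_le_add fun δ hδ _ => ?_
    obtain ⟨n, hn⟩ := ENNReal.exists_inv_nat_lt (a := (δ : ℝ≥0∞))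
      (by simpa using hδ.ne')
    calc ν A ≤ ν (D n) + (↑(n + 1))⁻¹ := hDle n
      _ ≤ ν D' + δ := by
        refine add_le_add (measure_mono (subset_iUnion D n)) ?_
        refine le_trans (ENNReal.inv_le_inv.2 ?_) hn.le
        exact_mod_cast Nat.le_succ n
  have hnull : ν (toMeasurable ν A \ D') = 0 := by
    rw [measure_diff (hD'sub.trans (subset_toMeasurable ν A)) hD'meas.nullMeasurableSet
      (measure_ne_top ν D'), measure_toMeasurable, hνA, tsub_self]
  have hae : A =ᵐ[ν] D' := by
    rw [ae_eq_set]
    constructor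
    · exact measure_mono_null (diff_subset_diff_left (subset_toMeasurable ν A)) hnull
    · rw [diff_eq_empty.2 hD'sub]; exact measure_empty
  exact hD'meas.nullMeasurableSet.congr hae.symm

/-- Every set in the product σ-algebra of `Ω × (ℕ → ℕ)` is the pullback of a Borel set
under a measurable map `Ω → (ℕ → Bool)` (times the identity). -/
theorem reduction {Ω : Type*} [m : MeasurableSpace Ω] {A : Set (Ω × (ℕ → ℕ))}
    (hA : MeasurableSet A) :
    ∃ φ : Ω → (ℕ → Bool), Measurable φ ∧ ∃ A' : Set ((ℕ → Bool) × (ℕ → ℕ)),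
      MeasurableSet A' ∧ A = (Prod.map φ id) ⁻¹' A' := by
  classical
  set P : Set (Ω × (ℕ → ℕ)) → Prop := fun B => ∃ φ : Ω → (ℕ → Bool), Measurable φ ∧
    ∃ B' : Set ((ℕ → Bool) × (ℕ → ℕ)), MeasurableSet B' ∧ B = (Prod.map φ id) ⁻¹' B' with hPdef
  have hempty : P ∅ :=
    ⟨fun _ _ => false, measurable_const, ∅, MeasurableSet.empty, by simp⟩
  have hcompl : ∀ B, P B → P Bᶜ := by
    rintro B ⟨φ, hφ, B', hB', rfl⟩
    exact ⟨φ, hφ, B'ᶜ, hB'.compl, by rw [preimage_compl]⟩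
  have hunion : ∀ g : ℕ → Set (Ω × (ℕ → ℕ)), (∀ n, P (g n)) → P (⋃ n, g n) := by
    intro g hg
    choose φ hφ B' hB' hBeq using hg
    set Φ : Ω → ℕ → Bool := fun ω k => φ (Nat.unpair k).1 ω (Nat.unpair k).2 with hΦ
    have hΦm : Measurable Φ :=
      measurable_pi_lambda _ fun k => (measurable_pi_apply _).comp (hφ (Nat.unpair k).1)
    set e : ℕ → (ℕ → Bool) → (ℕ → Bool) := fun n x k => x (Nat.pair n k) with he
    have hem : ∀ n, Measurable (e n) := fun n =>
      measurable_pi_lambda _ fun k => measurable_pi_apply _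
    have hkey : ∀ n, e n ∘ Φ = φ n := by
      intro n; funext ω k
      simp [he, hΦ, Nat.unpair_pair]
    refine ⟨Φ, hΦm, ⋃ n, (Prod.map (e n) id) ⁻¹' B' n,
      MeasurableSet.iUnion fun n => ((hem n).prodMap measurable_id) (hB' n), ?_⟩
    rw [preimage_iUnion]
    refine iUnion_congr fun n => ?_
    rw [hBeq n, ← preimage_comp, Prod.map_comp_map, hkey n]
    rfl
  set m' : MeasurableSpace (Ω × (ℕ → ℕ)) :=
    { MeasurableSet' := P
      measurableSet_empty := hempty
      measurableSet_compl := hcompl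
      measurableSet_iUnion := hunion } with hm'
  have hle : (Prod.instMeasurableSpace : MeasurableSpace (Ω × (ℕ → ℕ))) ≤ m' := by
    rw [show (Prod.instMeasurableSpace : MeasurableSpace (Ω × (ℕ → ℕ)))
        = MeasurableSpace.comap Prod.fst m ⊔ MeasurableSpace.comap Prod.snd inferInstance
      from rfl]
    refine sup_le ?_ ?_
    · rintro s ⟨B, hB, rfl⟩
      have hms : MeasurableSet {y : (ℕ → Bool) × (ℕ → ℕ) | y.1 0 = true} := by
        have heq : {y : (ℕ → Bool) × (ℕ → ℕ) | y.1 0 = true}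
            = (fun y : (ℕ → Bool) × (ℕ → ℕ) => y.1 0) ⁻¹' {true} := rfl
        rw [heq]
        exact ((measurable_pi_apply 0).comp measurable_fst) (measurableSet_singleton true)
      refine ⟨fun ω _ => if ω ∈ B then true else false,
        measurable_pi_lambda _ fun _ => Measurable.ite hB measurable_const measurable_const,
        {y : (ℕ → Bool) × (ℕ → ℕ) | y.1 0 = true}, hms, ?_⟩
      ext ⟨ω, t⟩
      by_cases h : ω ∈ B <;> simp [h, Prod.map]
    · rintro s ⟨B, hB, rfl⟩
      refine ⟨fun _ _ => false, measurable_const, Prod.snd ⁻¹' B, measurable_snd hB, ?_⟩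
      ext ⟨ω, t⟩
      simp [Prod.map]
  exact hle A hA

/-- The measurable projection theorem for `Ω × (ℕ → ℕ)`. -/
theorem proj_nullMeasurable {Ω : Type*} [MeasurableSpace Ω] {A : Set (Ω × (ℕ → ℕ))}
    (hA : MeasurableSet A) (μ : Measure Ω) [IsFiniteMeasure μ] :
    NullMeasurableSet (Prod.fst '' A) μ := by
  obtain ⟨φ, hφ, A', hA', rfl⟩ := reduction hA
  have him : Prod.fst '' ((Prod.map φ id) ⁻¹' A') = φ ⁻¹' (Prod.fst '' A') := by
    ext ω
    constructor
    · rintro ⟨⟨a, b⟩, h, rfl⟩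
      exact ⟨(φ a, b), h, rfl⟩
    · rintro ⟨y, hy, hy1⟩
      refine ⟨(ω, y.2), ?_, rfl⟩
      show (φ ω, y.2) ∈ A'
      rw [← hy1]
      simpa using hy
  rw [him]
  set ν := μ.map φ with hν
  haveI : IsFiniteMeasure ν := by
    constructor
    rw [hν, Measure.map_apply hφ MeasurableSet.univ]
    exact measure_lt_top μ _
  haveI : PolishSpace (ℕ → Bool) := { }
  have hana : AnalyticSet (Prod.fst '' A') := hA'.analyticSet.image_of_continuous continuous_fst
  have hnm := analytic_nullMeasurableSet hana ν
  obtain ⟨T, hT, hae⟩ := hnm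
  refine ⟨φ ⁻¹' T, hφ hT, ?_⟩
  have htrans : ∀ s t : Set (ℕ → Bool), ν (s \ t) = 0 → μ (φ ⁻¹' s \ φ ⁻¹' t) = 0 := by
    intro s t h0
    have hsub : φ ⁻¹' s \ φ ⁻¹' t ⊆ φ ⁻¹' (toMeasurable ν (s \ t)) := by
      intro ω hω
      exact subset_toMeasurable ν (s \ t) ⟨hω.1, hω.2⟩
    refine measure_mono_null hsub ?_
    rw [← Measure.map_apply hφ (measurableSet_toMeasurable ν (s \ t)), ← hν,
      measure_toMeasurable, h0]
  exact ae_eq_set.2 ⟨htrans _ _ (ae_eq_set.1 hae).1, htrans _ _ (ae_eq_set.1 hae).2⟩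

end Stmt7Aux

open Stmt7Aux

/-- The intersection of a closed-measurable Souslin family of compact-valued
multifunctions into a countably C-separated T1 space is universally
closed-measurable. -/

theorem stmt_7 {Ω : Type*} [MeasurableSpace Ω]
    {S : Type*} [TopologicalSpace S] [TopologicalSpace.MetrizableSpace S]
    [MeasurableSpace S] [BorelSpace S]
    (hS : ∃ (P : Type) (tP : TopologicalSpace P), @PolishSpace P tP ∧
      ∃ f : P → S, @Continuous P S tP _ f ∧ Function.Surjective f)
    {X : Type*} [TopologicalSpace X] [T1Space X]
    (hX : ∃ 𝒰 : Set (Set X), 𝒰.Countable ∧ (∀ U ∈ 𝒰, IsOpen U) ∧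
      ∀ K C : Set X, IsCompact K → IsClosed C → Disjoint K C →
        ∃ U ∈ 𝒰, C ⊆ U ∧ U ∩ K = ∅)
    (F : S → Ω → Set X)
    (hFcp : ∀ s ω, IsCompact (F s ω))
    (hF : ∀ C : Set X, IsClosed C →
      MeasurableSet {p : Ω × S | (F p.2 p.1 ∩ C).Nonempty}) :
    ∀ C : Set X, IsClosed C → ∀ (μ : Measure Ω), IsFiniteMeasure μ →
      NullMeasurableSet {ω | ((⋂ s, F s ω) ∩ C).Nonempty} μ := by
  classical
  intro C hC μ hμ
  haveI := hμ
  obtain ⟨𝒰, h𝒰c, h𝒰o, h𝒰s⟩ := hX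
  rcases isEmpty_or_nonempty S with hSe | hSne
  · have heq : {ω : Ω | ((⋂ s, F s ω) ∩ C).Nonempty} = {ω : Ω | C.Nonempty} := by
      ext ω
      simp [iInter_of_empty]
    rw [heq]
    by_cases hCne : C.Nonempty
    · have : {ω : Ω | C.Nonempty} = univ := by ext ω; simp [hCne]
      rw [this]; exact MeasurableSet.univ.nullMeasurableSet
    · have : {ω : Ω | C.Nonempty} = ∅ := by ext ω; simp [hCne]
      rw [this]; exact MeasurableSet.empty.nullMeasurableSet
  · haveI : Countable ↥𝒰 := h𝒰c.to_subtype
    obtain ⟨s₀⟩ := hSne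
    obtain ⟨P, tP, hP, fP, hfPc, hfPs⟩ := hS
    letI := tP
    haveI := hP
    haveI : Nonempty P := ⟨(hfPs s₀).choose⟩
    obtain ⟨q, hqc, hqs⟩ := PolishSpace.exists_nat_nat_continuous_surjective P
    set h : (ℕ → ℕ) → S := fP ∘ q with hh
    have hhc : Continuous h := hfPc.comp hqc
    have hhs : Surjective h := hfPs.comp hqs
    set G : (ℕ → ℕ) → ℕ → S := fun t n => h fun k => t (Nat.pair n k) with hG
    have hGsurj : Surjective G := by
      intro σ
      choose p hp using fun n => hhs (σ n)
      refine ⟨fun k => p (Nat.unpair k).1 (Nat.unpair k).2, ?_⟩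
      funext n
      show h (fun k => p (Nat.unpair (Nat.pair n k)).1 (Nat.unpair (Nat.pair n k)).2) = σ n
      simp only [Nat.unpair_pair]
      exact hp n
    have hGm : ∀ i, Measurable fun t : ℕ → ℕ => G t i := fun i =>
      (hhc.comp (continuous_pi fun k => continuous_apply _)).measurable
    have hMeets : ∀ (i : ℕ) (D : Set X), IsClosed D →
        MeasurableSet {p : Ω × (ℕ → ℕ) | (F (G p.2 i) p.1 ∩ D).Nonempty} := by
      intro i D hD
      have heq : {p : Ω × (ℕ → ℕ) | (F (G p.2 i) p.1 ∩ D).Nonempty}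
          = (fun p : Ω × (ℕ → ℕ) => (p.1, G p.2 i)) ⁻¹'
              {q : Ω × S | (F q.2 q.1 ∩ D).Nonempty} := rfl
      rw [heq]
      exact (measurable_fst.prodMk ((hGm i).comp measurable_snd)) (hF D hD)
    -- separation of a point from a compact set
    have hsep1 : ∀ (x : X) (K : Set X), IsCompact K → x ∉ K →
        ∃ U ∈ 𝒰, x ∈ U ∧ K ∩ U = ∅ := by
      intro x K hK hx
      obtain ⟨U, hU, hxU, hUK⟩ := h𝒰s K {x} hK isClosed_singleton
        (disjoint_singleton_right.2 hx)
      exact ⟨U, hU, hxU rfl, by rw [inter_comm]; exact hUK⟩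
    -- meeting an open set is witnessed by 𝒰-complements
    have hmeets_open : ∀ (K U : Set X), IsOpen U →
        ((K ∩ U).Nonempty ↔ ∃ V ∈ 𝒰, Uᶜ ⊆ V ∧ (K ∩ Vᶜ).Nonempty) := by
      intro K U hU
      constructor
      · rintro ⟨x, hxK, hxU⟩
        obtain ⟨V, hV, hV1, hV2⟩ := h𝒰s {x} Uᶜ isCompact_singleton hU.isClosed_compl
          (by simp [disjoint_singleton_left, hxU])
        refine ⟨V, hV, hV1, x, hxK, fun hxV => ?_⟩
        exact eq_empty_iff_forall_notMem.1 hV2 x ⟨hxV, rfl⟩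
      · rintro ⟨V, hV, hVsub, x, hxK, hxV⟩
        refine ⟨x, hxK, ?_⟩
        by_contra hxU
        exact hxV (hVsub hxU)
    set Bad : Set (Ω × (ℕ → ℕ)) := {p | C ∩ ⋂ n, F (G p.2 n) p.1 = ∅} with hBad
    -- finite combinatorial criterion
    have hcrit : ∀ (ω : Ω) (σ : ℕ → S),
        (C ∩ ⋂ n, F (σ n) ω = ∅) ↔
          ∃ l : List ((↥𝒰) × ℕ),
            (F (σ 0) ω ∩ (C \ ⋃ p ∈ l, (p.1 : Set X)) = ∅) ∧
            ∀ p ∈ l, F (σ p.2) ω ∩ (p.1 : Set X) = ∅ := by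
      intro ω σ
      constructor
      · intro hempty
        have hK₀c : IsCompact (F (σ 0) ω ∩ C) := (hFcp (σ 0) ω).inter_right hC
        have hx : ∀ x ∈ F (σ 0) ω ∩ C,
            ∃ (U : Set X) (nx : ℕ), U ∈ 𝒰 ∧ x ∈ U ∧ F (σ nx) ω ∩ U = ∅ := by
          intro x hxK
          have hex : ∃ n, x ∉ F (σ n) ω := by
            by_contra hcon
            push_neg at hcon
            have hmem : x ∈ C ∩ ⋂ n, F (σ n) ω := ⟨hxK.2, mem_iInter.2 hcon⟩
            rw [hempty] at hmem
            exact hmem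
          obtain ⟨nx, hn⟩ := hex
          obtain ⟨U, hU, hxU, hUK⟩ := hsep1 x (F (σ nx) ω) (hFcp _ _) hn
          exact ⟨U, nx, hU, hxU, hUK⟩
        choose! U nn hU hxU hUn using hx
        have hcover : F (σ 0) ω ∩ C ⊆ ⋃ x ∈ F (σ 0) ω ∩ C, U x := fun x hx' =>
          mem_biUnion hx' (hxU x hx')
        obtain ⟨b', hb'sub, hb'fin, hb'cov⟩ := hK₀c.elim_finite_subcover_image
          (fun x hx' => h𝒰o _ (hU x hx')) hcover
        refine ⟨hb'fin.toFinset.attach.toList.map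
          (fun z => (⟨U z.1, hU z.1 (hb'sub (hb'fin.mem_toFinset.1 z.2))⟩, nn z.1)), ?_, ?_⟩
        · rw [eq_empty_iff_forall_notMem]
          rintro y ⟨hyF, hyC, hyU⟩
          have hy₀ : y ∈ F (σ 0) ω ∩ C := ⟨hyF, hyC⟩
          obtain ⟨x, hxb', hyUx⟩ := mem_iUnion₂.1 (hb'cov hy₀)
          apply hyU
          refine mem_iUnion₂.2 ⟨(⟨U x, hU x (hb'sub hxb')⟩, nn x), ?_, hyUx⟩
          refine List.mem_map.2 ⟨⟨x, hb'fin.mem_toFinset.2 hxb'⟩, ?_, rfl⟩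
          exact Finset.mem_toList.2 (Finset.mem_attach _ _)
        · intro p hp
          simp only [List.mem_map, Finset.mem_toList] at hp
          obtain ⟨z, _, rfl⟩ := hp
          exact hUn z.1 (hb'sub (hb'fin.mem_toFinset.1 z.2))
      · rintro ⟨l, hl1, hl2⟩
        rw [eq_empty_iff_forall_notMem]
        rintro x ⟨hxC, hxI⟩
        rw [mem_iInter] at hxI
        by_cases hxU : x ∈ ⋃ p ∈ l, (p.1 : Set X)
        · obtain ⟨p, hpl, hxp⟩ := mem_iUnion₂.1 hxU
          exact eq_empty_iff_forall_notMem.1 (hl2 p hpl) x ⟨hxI p.2, hxp⟩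
        · exact eq_empty_iff_forall_notMem.1 hl1 x ⟨hxI 0, hxC, hxU⟩
    -- countable reduction
    have hred : ∀ ω : Ω, (C ∩ ⋂ s : S, F s ω = ∅) ↔ ∃ t : ℕ → ℕ, (ω, t) ∈ Bad := by
      intro ω
      constructor
      · intro hemp
        have h𝒰ne : 𝒰.Nonempty := by
          obtain ⟨U, hU, -⟩ := h𝒰s ∅ ∅ isCompact_empty isClosed_empty disjoint_bot_left
          exact ⟨U, hU⟩
        obtain ⟨e, he⟩ := h𝒰c.exists_eq_range h𝒰ne
        set τ : ℕ → S := fun k =>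
          if hk : ∃ s : S, F s ω ∩ e k = ∅ then hk.choose else s₀ with hτdef
        have hτ : ∀ k, (∃ s : S, F s ω ∩ e k = ∅) → F (τ k) ω ∩ e k = ∅ := by
          intro k hk
          simp only [hτdef, dif_pos hk]
          exact hk.choose_spec
        set σ : ℕ → S := fun n => if n = 0 then s₀ else τ (n - 1) with hσdef
        have hσemp : C ∩ ⋂ n, F (σ n) ω = ∅ := by
          rw [eq_empty_iff_forall_notMem]
          rintro x ⟨hxC, hxI⟩
          rw [mem_iInter] at hxI
          have hex : ∃ s, x ∉ F s ω := by
            by_contra hcon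
            push_neg at hcon
            have hmem : x ∈ C ∩ ⋂ s : S, F s ω := ⟨hxC, mem_iInter.2 hcon⟩
            rw [hemp] at hmem
            exact hmem
          obtain ⟨s, hs⟩ := hex
          obtain ⟨Ux, hUx, hxUx, hUxF⟩ := hsep1 x (F s ω) (hFcp s ω) hs
          have : Ux ∈ range e := by rw [← he]; exact hUx
          obtain ⟨k, rfl⟩ := this
          have hk : ∃ s : S, F s ω ∩ e k = ∅ := ⟨s, hUxF⟩
          have h1 : F (τ k) ω ∩ e k = ∅ := hτ k hk
          have hxτ : x ∈ F (τ k) ω := by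
            have := hxI (k + 1)
            simpa [hσdef] using this
          exact eq_empty_iff_forall_notMem.1 h1 x ⟨hxτ, hxUx⟩
        obtain ⟨t, ht⟩ := hGsurj σ
        refine ⟨t, ?_⟩
        show C ∩ ⋂ n, F (G t n) ω = ∅
        rw [ht]
        exact hσemp
      · rintro ⟨t, htBad⟩
        have htB : C ∩ ⋂ n, F (G t n) ω = ∅ := htBad
        rw [eq_empty_iff_forall_notMem]
        rintro x ⟨hxC, hxI⟩
        rw [mem_iInter] at hxI
        have : x ∈ C ∩ ⋂ n, F (G t n) ω := ⟨hxC, mem_iInter.2 fun n => hxI (G t n)⟩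
        rw [htB] at this
        exact this
    -- measurability of Bad
    have hopen_meas : ∀ (i : ℕ) (W : Set X), W ∈ 𝒰 →
        MeasurableSet {p : Ω × (ℕ → ℕ) | (F (G p.2 i) p.1 ∩ W).Nonempty} := by
      intro i W hW
      have heq : {p : Ω × (ℕ → ℕ) | (F (G p.2 i) p.1 ∩ W).Nonempty}
          = ⋃ (V : ↥𝒰) (_ : Wᶜ ⊆ (V : Set X)),
              {p : Ω × (ℕ → ℕ) | (F (G p.2 i) p.1 ∩ ((V : Set X))ᶜ).Nonempty} := by
        ext p
        simp only [mem_iUnion, mem_setOf_eq]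
        rw [hmeets_open _ W (h𝒰o W hW)]
        constructor
        · rintro ⟨V, hV, h1, h2⟩; exact ⟨⟨V, hV⟩, h1, h2⟩
        · rintro ⟨⟨V, hV⟩, h1, h2⟩; exact ⟨V, hV, h1, h2⟩
      rw [heq]
      exact MeasurableSet.iUnion fun V => MeasurableSet.iUnion fun _ =>
        hMeets i _ (h𝒰o _ V.2).isClosed_compl
    have hBadMeas : MeasurableSet Bad := by
      have hBadEq : Bad = ⋃ l : List ((↥𝒰) × ℕ),
          ({p : Ω × (ℕ → ℕ) |
              (F (G p.2 0) p.1 ∩ (C \ ⋃ q ∈ l, (q.1 : Set X))).Nonempty}ᶜ ∩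
            ⋂ q ∈ l,
              {p : Ω × (ℕ → ℕ) | (F (G p.2 q.2) p.1 ∩ (q.1 : Set X)).Nonempty}ᶜ) := by
        ext p
        simp only [hBad, mem_setOf_eq, mem_iUnion, mem_inter_iff, mem_compl_iff, mem_iInter,
          not_nonempty_iff_eq_empty]
        exact hcrit p.1 fun n => G p.2 n
      rw [hBadEq]
      refine MeasurableSet.iUnion fun l => MeasurableSet.inter ?_ ?_
      · exact (hMeets 0 _ (hC.sdiff (isOpen_biUnion fun q _ => h𝒰o _ q.1.2))).compl
      · exact MeasurableSet.biInter (l.finite_toSet).countable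
          fun q _ => (hopen_meas q.2 _ q.1.2).compl
    have hproj := proj_nullMeasurable hBadMeas μ
    have hcompl : {ω | ((⋂ s, F s ω) ∩ C).Nonempty} = (Prod.fst '' Bad)ᶜ := by
      ext ω
      simp only [mem_setOf_eq, mem_compl_iff]
      have h1 : ω ∈ Prod.fst '' Bad ↔ ∃ t, (ω, t) ∈ Bad := by
        constructor
        · rintro ⟨⟨ω', t⟩, hp, rfl⟩; exact ⟨t, hp⟩
        · rintro ⟨t, ht⟩; exact ⟨(ω, t), ht, rfl⟩
      constructor
      · intro hne hmem
        obtain ⟨t, ht⟩ := h1.1 hmem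
        have hemp := (hred ω).2 ⟨t, ht⟩
        rw [inter_comm, hemp] at hne
        exact Set.not_nonempty_empty hne
      · intro hmem
        rw [nonempty_iff_ne_empty]
        intro heq
        exact hmem (h1.2 ((hred ω).1 (by rw [inter_comm]; exact heq)))
    rw [hcompl]
    exact hproj.compl
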